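/- arXiv:1411.7000 — 2 statements merged into one kernel-verified Lean document; each statement's English description precedes it below -/
import Mathlib

section
/- The bounded Robba ring E_K^† is a field: every nonzero element ∑_{i∈ℤ} a_i t^i with sup_i ‖a_i‖ < ∞ and such that there exists η < 1 with ‖a_i‖η^i → 0 as i → −∞, has a multiplicative inverse satisfying the same conditions. -/
/-!
STATEMENT 1: The bounded Robba ring `E_K^†` is a field: every nonzero element
`∑ aᵢ tⁱ` with `sup ‖aᵢ‖ < ∞` and such that there exists `η < 1` with
`‖aᵢ‖ ηⁱ → 0` as `i → -∞`, has a multiplicative inverse satisfying the same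
conditions.  Here `K` is a complete discretely valued nonarchimedean field of
characteristic 0.
-/

open Filter Topology

variable {K : Type*} [NontriviallyNormedField K] [CompleteSpace K] [CharZero K]
  [IsUltrametricDist K]

/-- Membership in the bounded Robba ring: bounded coefficients such that for some
`η < 1`, `‖aᵢ‖ηⁱ → 0` as `i → -∞`. -/
def BoundedRobbaMem (a : ℤ → K) : Prop :=
  BddAbove (Set.range fun i : ℤ => ‖a i‖) ∧
    ∃ η : ℝ, 0 < η ∧ η < 1 ∧ Tendsto (fun i : ℤ => ‖a i‖ * η ^ i) atBot (𝓝 0)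

/-- Multiplication of doubly infinite series (convolution). -/
noncomputable def seriesMul (a b : ℤ → K) : ℤ → K :=
  fun n => ∑' i : ℤ, a i * b (n - i)

/-- The unit series `1 = t^0`. -/
def seriesOne : ℤ → K := fun n => if n = 0 then 1 else 0

set_option linter.unusedSectionVars false in
lemma robba_aux_zpow_tendsto_atTop {r : ℝ} (h0 : 0 ≤ r) (h1 : r < 1) :
    Tendsto (fun i : ℤ => r ^ i) atTop (𝓝 0) := by
  have hN : Tendsto (fun n : ℕ => r ^ n) atTop (𝓝 0) :=
    tendsto_pow_atTop_nhds_zero_of_lt_one h0 h1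
  have hT : Tendsto Int.toNat atTop atTop :=
    tendsto_atTop_atTop_of_monotone (fun a b h => Int.toNat_le_toNat h)
      (fun b => ⟨(b : ℤ), by simp⟩)
  refine (hN.comp hT).congr' ?_
  filter_upwards [eventually_ge_atTop (0 : ℤ)] with i hi
  simp [Function.comp, ← zpow_natCast, Int.toNat_of_nonneg hi]

lemma robba_aux_zpow_tendsto_atBot {r : ℝ} (h0 : 0 ≤ r) (h1 : r < 1) :
    Tendsto (fun i : ℤ => r ^ (-i)) atBot (𝓝 0) :=
  (robba_aux_zpow_tendsto_atTop h0 h1).comp tendsto_neg_atBot_atTop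

lemma robba_aux_flip {r : ℝ} (hr0 : 0 < r) {v D : ℝ} {m : ℤ} (h : v * r ^ m ≤ D) :
    v ≤ D * r ^ (-m) := by
  calc v = v * r ^ m * r ^ (-m) := by
        rw [mul_assoc, ← zpow_add₀ hr0.ne']; simp
    _ ≤ D * r ^ (-m) := mul_le_mul_of_nonneg_right h (zpow_pos hr0 _).le

set_option linter.unusedSectionVars false in
lemma robba_aux_conv_summable {r C₁ D₁ C₂ D₂ : ℝ} (hr0 : 0 < r) (hr1 : r < 1)
    {x y : ℤ → K} (hx : ∀ i, ‖x i‖ ≤ C₁ ∧ ‖x i‖ ≤ D₁ * r ^ (-i))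
    (hy : ∀ i, ‖y i‖ ≤ C₂ ∧ ‖y i‖ ≤ D₂ * r ^ (-i)) (j : ℤ) :
    Summable fun i => x i * y (j - i) := by
  have hC₁ : 0 ≤ C₁ := (norm_nonneg _).trans (hx 0).1
  have hC₂ : 0 ≤ C₂ := (norm_nonneg _).trans (hy 0).1
  have hD₁ : 0 ≤ D₁ := by
    have := (norm_nonneg (x 0)).trans (hx 0).2
    simpa using this
  have hD₂ : 0 ≤ D₂ := by
    have := (norm_nonneg (y 0)).trans (hy 0).2
    simpa using this
  apply NonarchimedeanAddGroup.summable_of_tendsto_cofinite_zero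
  rw [Int.cofinite_eq, tendsto_sup]
  constructor
  · refine squeeze_zero_norm (a := fun i : ℤ => D₁ * C₂ * r ^ (-i)) (fun i => ?_) ?_
    · rw [norm_mul]
      calc ‖x i‖ * ‖y (j - i)‖ ≤ (D₁ * r ^ (-i)) * C₂ :=
            mul_le_mul (hx i).2 (hy _).1 (norm_nonneg _) (by positivity)
        _ = D₁ * C₂ * r ^ (-i) := by ring
    · simpa using (robba_aux_zpow_tendsto_atBot hr0.le hr1).const_mul (D₁ * C₂)
  · refine squeeze_zero_norm (a := fun i : ℤ => C₁ * D₂ * r ^ (-j) * r ^ i) (fun i => ?_) ?_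
    · rw [norm_mul]
      calc ‖x i‖ * ‖y (j - i)‖ ≤ C₁ * (D₂ * r ^ (-(j - i))) :=
            mul_le_mul (hx i).1 (hy _).2 (norm_nonneg _) hC₁
        _ = C₁ * D₂ * r ^ (-j) * r ^ i := by
            rw [show -(j - i) = -j + i by ring, zpow_add₀ hr0.ne']; ring
    · simpa using (robba_aux_zpow_tendsto_atTop hr0.le hr1).const_mul (C₁ * D₂ * r ^ (-j))

set_option linter.unusedSectionVars false in
lemma robba_aux_conv_bound {r C₁ D₁ C₂ D₂ : ℝ} (hr0 : 0 < r)
    {x y : ℤ → K} (hx : ∀ i, ‖x i‖ ≤ C₁ ∧ ‖x i‖ ≤ D₁ * r ^ (-i))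
    (hy : ∀ i, ‖y i‖ ≤ C₂ ∧ ‖y i‖ ≤ D₂ * r ^ (-i)) (j : ℤ) :
    ‖seriesMul x y j‖ ≤ C₁ * C₂ ∧ ‖seriesMul x y j‖ ≤ D₁ * D₂ * r ^ (-j) := by
  have hC₁ : 0 ≤ C₁ := (norm_nonneg _).trans (hx 0).1
  have hC₂ : 0 ≤ C₂ := (norm_nonneg _).trans (hy 0).1
  have hD₁ : 0 ≤ D₁ := by have := (norm_nonneg (x 0)).trans (hx 0).2; simpa using this
  have hD₂ : 0 ≤ D₂ := by have := (norm_nonneg (y 0)).trans (hy 0).2; simpa using this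
  constructor
  · apply IsUltrametricDist.norm_tsum_le_of_forall_le_of_nonneg (by positivity)
    intro i
    rw [norm_mul]
    exact mul_le_mul (hx i).1 (hy _).1 (norm_nonneg _) hC₁
  · apply IsUltrametricDist.norm_tsum_le_of_forall_le_of_nonneg (by positivity)
    intro i
    rw [norm_mul]
    calc ‖x i‖ * ‖y (j - i)‖ ≤ (D₁ * r ^ (-i)) * (D₂ * r ^ (-(j - i))) :=
          mul_le_mul (hx i).2 (hy _).2 (norm_nonneg _) (by positivity)
      _ = D₁ * D₂ * r ^ (-j) * (r ^ (-i) * r ^ i) := by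
          rw [show -(j - i) = -j + i by ring, zpow_add₀ hr0.ne']; ring
      _ = D₁ * D₂ * r ^ (-j) := by
          rw [← zpow_add₀ hr0.ne']; simp

set_option linter.unusedSectionVars false in
lemma robba_aux_choose {c : ℝ} (hc0 : 0 < c) (hc1 : c < 1)
    (hcv : ∀ x : K, x ≠ 0 → ∃ n : ℤ, ‖x‖ = c ^ n)
    {a : ℤ → K} {M₀ : ℝ} (hM₀ : ∀ i, ‖a i‖ ≤ M₀)
    {η : ℝ} (hη0 : 0 < η) (hη1 : η < 1)
    (hdec : Tendsto (fun i : ℤ => ‖a i‖ * η ^ i) atBot (𝓝 0))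
    (hne : ∃ i, a i ≠ 0) :
    ∃ (i₀ : ℤ) (r q : ℝ), η < r ∧ r < 1 ∧ 0 ≤ q ∧ q < 1 ∧ a i₀ ≠ 0 ∧
      (∀ i, ‖a i‖ ≤ ‖a i₀‖) ∧
      ∀ i, i ≠ i₀ → ‖a i‖ * r ^ i ≤ q * (‖a i₀‖ * r ^ i₀) := by
  have hnt : Tendsto (fun i : ℤ => ‖a i‖) atBot (𝓝 0) := by
    have h2 : Tendsto (fun i : ℤ => ‖a i‖ * η ^ i * η ^ (-i)) atBot (𝓝 0) := by
      simpa using hdec.mul (robba_aux_zpow_tendsto_atBot hη0.le hη1)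
    refine h2.congr fun i => ?_
    rw [mul_assoc, ← zpow_add₀ hη0.ne']
    simp
  have hTne : ∃ n : ℤ, ∃ i, a i ≠ 0 ∧ ‖a i‖ = c ^ n := by
    obtain ⟨i, hi⟩ := hne
    obtain ⟨n, hn⟩ := hcv _ hi
    exact ⟨n, i, hi, hn⟩
  obtain ⟨m, hm⟩ := pow_unbounded_of_one_lt M₀ (one_lt_inv₀ hc0 |>.mpr hc1)
  have hmz : M₀ < c ^ (-(m : ℤ)) := by
    rwa [zpow_neg, zpow_natCast, ← inv_pow]
  have hbdd : ∀ n : ℤ, (∃ i, a i ≠ 0 ∧ ‖a i‖ = c ^ n) → -(m : ℤ) ≤ n := by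
    rintro n ⟨i, hi, he⟩
    have h1 : c ^ n < c ^ (-(m : ℤ)) := lt_of_le_of_lt (he ▸ hM₀ i) hmz
    exact ((zpow_lt_zpow_iff_right_of_lt_one₀ hc0 hc1).mp h1).le
  obtain ⟨n₀, ⟨i₁, hi₁, hMn⟩, hleast⟩ := Int.exists_least_of_bdd ⟨-(m : ℤ), hbdd⟩ hTne
  have hMpos : (0:ℝ) < c ^ n₀ := zpow_pos hc0 n₀
  have hMmax : ∀ i, ‖a i‖ ≤ c ^ n₀ := by
    intro i
    by_cases h : a i = 0
    · simp [h, hMpos.le]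
    · obtain ⟨n, hn⟩ := hcv _ h
      rw [hn]
      exact zpow_le_zpow_right_of_le_one₀ hc0 hc1.le (hleast n ⟨i, h, hn⟩)
  have hgap : ∀ i, ‖a i‖ ≠ c ^ n₀ → ‖a i‖ ≤ c * c ^ n₀ := by
    intro i hi
    by_cases h : a i = 0
    · simp only [h, norm_zero]; positivity
    · obtain ⟨n, hn⟩ := hcv _ h
      have h1 : n₀ ≤ n := hleast n ⟨i, h, hn⟩
      have h2 : n ≠ n₀ := fun e => hi (by rw [hn, e])
      have h3 : n₀ + 1 ≤ n := by omega
      rw [hn]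
      calc c ^ n ≤ c ^ (n₀ + 1) := zpow_le_zpow_right_of_le_one₀ hc0 hc1.le h3
        _ = c * c ^ n₀ := by rw [zpow_add_one₀ hc0.ne']; ring
  obtain ⟨I, hI⟩ := eventually_atBot.mp (hnt.eventually_lt_const hMpos)
  have hSbdd : ∀ i : ℤ, ‖a i‖ = c ^ n₀ → I + 1 ≤ i := by
    intro i hi
    by_contra h
    exact absurd hi (ne_of_lt (hI i (by omega)))
  obtain ⟨i₀, hi₀M, hi₀least⟩ :=
    Int.exists_least_of_bdd (P := fun i => ‖a i‖ = c ^ n₀) ⟨I + 1, hSbdd⟩ ⟨i₁, hMn⟩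
  have hai₀ : a i₀ ≠ 0 := by
    intro h
    rw [h, norm_zero] at hi₀M
    exact absurd hi₀M.symm (ne_of_gt hMpos)
  obtain ⟨N₁, hN₁⟩ := eventually_atBot.mp
    (hdec.eventually_lt_const (show (0:ℝ) < c * c ^ n₀ * η ^ i₀ by positivity))
  set N : ℤ := min N₁ i₀ with hN
  have hNle : N ≤ i₀ := min_le_right _ _
  have hfar : ∀ i < N, ‖a i‖ * η ^ i ≤ c * c ^ n₀ * η ^ i₀ := by
    intro i hi
    have : i ≤ N₁ := le_trans hi.le (min_le_left _ _)
    exact (hN₁ i this).le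
  set k : ℕ := (i₀ - N).toNat with hkdef
  have hk : (k : ℤ) = i₀ - N := Int.toNat_of_nonneg (by omega)
  set r : ℝ := max ((1 + η) / 2) (c ^ ((1 : ℝ) / (k + 1))) with hrdef
  have hηr : η < r := lt_of_lt_of_le (by linarith) (le_max_left _ _)
  have hr0 : (0:ℝ) < r := hη0.trans hηr
  have hr1 : r < 1 :=
    max_lt (by linarith) (Real.rpow_lt_one hc0.le hc1 (by positivity))
  have hck : c < r ^ (k : ℕ) := by
    have h1 : c ^ ((1 : ℝ) / (k + 1)) ≤ r := le_max_right _ _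
    have h2 : (c ^ ((1 : ℝ) / (k + 1))) ^ (k : ℕ) = c ^ ((k : ℝ) / (k + 1)) := by
      rw [← Real.rpow_natCast (c ^ ((1 : ℝ) / (k + 1))) k, ← Real.rpow_mul hc0.le]
      congr 1
      field_simp
    have h3 : c < c ^ ((k : ℝ) / (k + 1)) := by
      have hlt : (k : ℝ) / (k + 1) < 1 := by
        rw [div_lt_one (by positivity)]; linarith
      calc c = c ^ (1 : ℝ) := (Real.rpow_one c).symm
        _ < c ^ ((k : ℝ) / (k + 1)) := Real.rpow_lt_rpow_of_exponent_gt hc0 hc1 hlt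
    calc c < c ^ ((k : ℝ) / (k + 1)) := h3
      _ = (c ^ ((1 : ℝ) / (k + 1))) ^ (k : ℕ) := h2.symm
      _ ≤ r ^ (k : ℕ) := pow_le_pow_left₀ (Real.rpow_nonneg hc0.le _) h1 k
  set q : ℝ := max r (c / r ^ (k : ℕ)) with hqdef
  have hq0 : 0 ≤ q := le_trans hr0.le (le_max_left _ _)
  have hq1 : q < 1 := max_lt hr1 ((div_lt_one (by positivity)).mpr hck)
  have hcq : c ≤ q := by
    refine le_trans ?_ (le_max_right _ _)
    rw [le_div_iff₀ (by positivity)]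
    exact mul_le_of_le_one_right hc0.le (pow_le_one₀ hr0.le hr1.le)
  refine ⟨i₀, r, q, hηr, hr1, hq0, hq1, hai₀, ?_, ?_⟩
  · intro i; rw [hi₀M]; exact hMmax i
  intro i hi
  rw [hi₀M]
  have hzpos : ∀ j : ℤ, (0:ℝ) < r ^ j := fun j => zpow_pos hr0 j
  rcases lt_or_gt_of_ne hi with h | h
  · rcases lt_or_ge i N with hiN | hiN
    · have h2 : ‖a i‖ ≤ c * c ^ n₀ * η ^ (i₀ - i) := by
        have hpos : (0:ℝ) < η ^ i := zpow_pos hη0 i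
        have := (le_div_iff₀ hpos).mpr (hfar i hiN)
        rwa [mul_div_assoc, ← zpow_sub₀ hη0.ne'] at this
      have hηrle : η ^ (i₀ - i) ≤ r ^ (i₀ - i) := by
        have hm2 : ((i₀ - i).toNat : ℤ) = i₀ - i := Int.toNat_of_nonneg (by omega)
        rw [← hm2, zpow_natCast, zpow_natCast]
        exact pow_le_pow_left₀ hη0.le hηr.le _
      calc ‖a i‖ * r ^ i ≤ (c * c ^ n₀ * η ^ (i₀ - i)) * r ^ i :=
            mul_le_mul_of_nonneg_right h2 (hzpos i).le
        _ ≤ (c * c ^ n₀ * r ^ (i₀ - i)) * r ^ i := by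
            have := mul_le_mul_of_nonneg_left hηrle (by positivity : (0:ℝ) ≤ c * c ^ n₀)
            exact mul_le_mul_of_nonneg_right this (hzpos i).le
        _ = c * (c ^ n₀ * r ^ i₀) := by
            rw [mul_assoc (c * c ^ n₀), ← zpow_add₀ hr0.ne',
              show i₀ - i + i = i₀ by ring]
            ring
        _ ≤ q * (c ^ n₀ * r ^ i₀) := mul_le_mul_of_nonneg_right hcq (by positivity)
    · have hgap' : ‖a i‖ ≤ c * c ^ n₀ := by
        apply hgap
        intro he
        exact absurd (hi₀least i he) (by omega)
      have hsplit : r ^ i = r ^ (i - i₀) * r ^ i₀ := by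
        rw [← zpow_add₀ hr0.ne']; congr 1; ring
      have hrr : r ^ (i - i₀) ≤ (r ^ (k : ℕ))⁻¹ := by
        have h1 : r ^ (i - i₀) ≤ r ^ (N - i₀) :=
          zpow_le_zpow_right_of_le_one₀ hr0 hr1.le (by omega)
        have h2 : r ^ (N - i₀) = (r ^ (k : ℕ))⁻¹ := by
          rw [← zpow_natCast r k, ← zpow_neg, hk]
          congr 1
          omega
        rw [← h2]; exact h1
      calc ‖a i‖ * r ^ i ≤ (c * c ^ n₀) * r ^ i :=
            mul_le_mul_of_nonneg_right hgap' (hzpos i).le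
        _ = (c * r ^ (i - i₀)) * (c ^ n₀ * r ^ i₀) := by rw [hsplit]; ring
        _ ≤ (c / r ^ (k : ℕ)) * (c ^ n₀ * r ^ i₀) := by
            apply mul_le_mul_of_nonneg_right _ (by positivity)
            rw [div_eq_mul_inv]
            exact mul_le_mul_of_nonneg_left hrr hc0.le
        _ ≤ q * (c ^ n₀ * r ^ i₀) :=
            mul_le_mul_of_nonneg_right (le_max_right _ _) (by positivity)
  · have h1 : r ^ (i - i₀) ≤ r := by
      calc r ^ (i - i₀) ≤ r ^ (1 : ℤ) :=
            zpow_le_zpow_right_of_le_one₀ hr0 hr1.le (by omega)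
        _ = r := zpow_one r
    calc ‖a i‖ * r ^ i ≤ c ^ n₀ * r ^ i :=
          mul_le_mul_of_nonneg_right (hMmax i) (hzpos i).le
      _ = c ^ n₀ * r ^ i₀ * r ^ (i - i₀) := by
          rw [mul_assoc, ← zpow_add₀ hr0.ne', show i₀ + (i - i₀) = i by ring]
      _ ≤ c ^ n₀ * r ^ i₀ * r := mul_le_mul_of_nonneg_left h1 (by positivity)
      _ = r * (c ^ n₀ * r ^ i₀) := by ring
      _ ≤ q * (c ^ n₀ * r ^ i₀) :=
          mul_le_mul_of_nonneg_right (le_max_left _ _) (by positivity)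

/-- The bounded Robba ring is a field: every nonzero element has a multiplicative
inverse in the bounded Robba ring.  The hypothesis `hdisc` says that `K` is
discretely valued. -/
theorem bounded_robba_ring_is_field
    (hdisc : ∃ c : ℝ, 0 < c ∧ c < 1 ∧ ∀ x : K, x ≠ 0 → ∃ n : ℤ, ‖x‖ = c ^ n)
    (a : ℤ → K) (ha : BoundedRobbaMem a) (ha0 : a ≠ 0) :
    ∃ b : ℤ → K, BoundedRobbaMem b ∧ seriesMul a b = seriesOne := by
  obtain ⟨c, hc0, hc1, hcv⟩ := hdisc
  obtain ⟨⟨M₀, hM₀'⟩, η, hη0, hη1, hdec⟩ := ha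
  have hM₀ : ∀ i, ‖a i‖ ≤ M₀ := fun i => hM₀' (Set.mem_range_self i)
  have hne : ∃ i, a i ≠ 0 := Function.ne_iff.mp ha0
  obtain ⟨i₀, r, q, hηr, hr1, hq0, hq1, hai₀, hmax, hkey⟩ :=
    robba_aux_choose hc0 hc1 hcv hM₀ hη0 hη1 hdec hne
  have hr0 : (0:ℝ) < r := hη0.trans hηr
  set M : ℝ := ‖a i₀‖ with hMdef
  have hMpos : 0 < M := norm_pos_iff.mpr hai₀
  -- normalized series a' with a' 0 = 1, and its "off-center" part z
  set a' : ℤ → K := fun m => (a i₀)⁻¹ * a (m + i₀) with ha'def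
  set z : ℤ → K := fun m => if m = 0 then 0 else a' m with hzdef
  have ha'norm : ∀ m, ‖a' m‖ = ‖a (m + i₀)‖ / M := by
    intro m
    rw [ha'def]
    simp only [norm_mul, norm_inv]
    rw [← hMdef, inv_mul_eq_div]
  have ha'0 : a' 0 = 1 := by
    rw [ha'def]
    simp [inv_mul_cancel₀ hai₀]
  have ha'r : ∀ m, ‖a' m‖ * r ^ m ≤ 1 := by
    intro m
    by_cases hm : m = 0
    · subst hm
      rw [ha'0]
      simp
    · have h1 : ‖a (m + i₀)‖ * r ^ (m + i₀) ≤ q * (M * r ^ i₀) :=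
        hkey (m + i₀) (by omega)
      have h2 : ‖a (m + i₀)‖ * r ^ m ≤ q * M := by
        have hp : (0:ℝ) < r ^ i₀ := zpow_pos hr0 i₀
        rw [← mul_le_mul_iff_of_pos_right hp]
        calc ‖a (m + i₀)‖ * r ^ m * r ^ i₀ = ‖a (m + i₀)‖ * r ^ (m + i₀) := by
              rw [mul_assoc, ← zpow_add₀ hr0.ne']
          _ ≤ q * (M * r ^ i₀) := h1
          _ = q * M * r ^ i₀ := by ring
      rw [ha'norm, div_mul_eq_mul_div, div_le_iff₀ hMpos, one_mul]
      calc ‖a (m + i₀)‖ * r ^ m ≤ q * M := h2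
        _ ≤ 1 * M := mul_le_mul_of_nonneg_right hq1.le hMpos.le
        _ = M := one_mul M
  have hactrl : ∀ m, ‖a' m‖ ≤ 1 ∧ ‖a' m‖ ≤ 1 * r ^ (-m) := by
    intro m
    constructor
    · rw [ha'norm, div_le_one hMpos]; exact hmax _
    · exact robba_aux_flip hr0 (ha'r m)
  have hzctrl : ∀ m, ‖z m‖ ≤ 1 ∧ ‖z m‖ ≤ q * r ^ (-m) := by
    intro m
    by_cases hm : m = 0
    · subst hm
      have hz0 : z 0 = 0 := by simp [hzdef]
      rw [hz0, norm_zero]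
      constructor
      · exact zero_le_one
      · positivity
    · have hzm : z m = a' m := by simp [hzdef, hm]
      rw [hzm]
      refine ⟨(hactrl m).1, robba_aux_flip hr0 ?_⟩
      have h1 : ‖a (m + i₀)‖ * r ^ (m + i₀) ≤ q * (M * r ^ i₀) :=
        hkey (m + i₀) (by omega)
      have h2 : ‖a (m + i₀)‖ * r ^ m ≤ q * M := by
        have hp : (0:ℝ) < r ^ i₀ := zpow_pos hr0 i₀
        rw [← mul_le_mul_iff_of_pos_right hp]
        calc ‖a (m + i₀)‖ * r ^ m * r ^ i₀ = ‖a (m + i₀)‖ * r ^ (m + i₀) := by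
              rw [mul_assoc, ← zpow_add₀ hr0.ne']
          _ ≤ q * (M * r ^ i₀) := h1
          _ = q * M * r ^ i₀ := by ring
      rw [ha'norm, div_mul_eq_mul_div, div_le_iff₀ hMpos]
      exact h2
  have hone : ∀ m : ℤ, ‖(seriesOne : ℤ → K) m‖ ≤ 1 ∧ ‖(seriesOne : ℤ → K) m‖ ≤ 1 * r ^ (-m) := by
    intro m
    by_cases hm : m = 0
    · subst hm
      simp [seriesOne]
    · simp only [seriesOne, if_neg hm, norm_zero]
      constructor
      · exact zero_le_one
      · positivity
  have haz : ∀ i, a' i = seriesOne i + z i := by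
    intro i
    by_cases h : i = 0
    · subst h; simp [seriesOne, hzdef, ha'0]
    · simp [seriesOne, hzdef, h]
  -- powers of z under convolution
  set w : ℕ → ℤ → K := fun k => (seriesMul z)^[k] seriesOne with hwdef
  have hw0 : w 0 = seriesOne := rfl
  have hwsucc : ∀ k, w (k + 1) = seriesMul z (w k) := fun k =>
    Function.iterate_succ_apply' (seriesMul z) k seriesOne
  have hwctrl : ∀ k, ∀ m, ‖w k m‖ ≤ 1 ∧ ‖w k m‖ ≤ q ^ k * r ^ (-m) := by
    intro k
    induction k with
    | zero => intro m; simpa [hw0] using hone m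
    | succ n ih =>
      intro m
      rw [hwsucc]
      have h := robba_aux_conv_bound hr0 hzctrl ih m
      refine ⟨by simpa using h.1, ?_⟩
      calc ‖seriesMul z (w n) m‖ ≤ q * q ^ n * r ^ (-m) := h.2
        _ = q ^ (n + 1) * r ^ (-m) := by rw [pow_succ]; ring
  -- the geometric series
  have hterm_norm : ∀ (k : ℕ) (m : ℤ), ‖(-1:K) ^ k * w k m‖ = ‖w k m‖ := by
    intro k m
    rw [norm_mul, norm_pow, norm_neg, norm_one, one_pow, one_mul]
  have hsumk : ∀ m, Summable fun k : ℕ => (-1:K) ^ k * w k m := by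
    intro m
    apply NonarchimedeanAddGroup.summable_of_tendsto_cofinite_zero
    rw [Nat.cofinite_eq_atTop]
    refine squeeze_zero_norm (a := fun k : ℕ => r ^ (-m) * q ^ k) (fun k => ?_) ?_
    · rw [hterm_norm]
      calc ‖w k m‖ ≤ q ^ k * r ^ (-m) := (hwctrl k m).2
        _ = r ^ (-m) * q ^ k := by ring
    · simpa using (tendsto_pow_atTop_nhds_zero_of_lt_one hq0 hq1).const_mul (r ^ (-m))
  set b' : ℤ → K := fun m => ∑' k : ℕ, (-1:K) ^ k * w k m with hb'def
  have hb'ctrl : ∀ m, ‖b' m‖ ≤ 1 ∧ ‖b' m‖ ≤ 1 * r ^ (-m) := by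
    intro m
    constructor
    · apply IsUltrametricDist.norm_tsum_le_of_forall_le_of_nonneg zero_le_one
      intro k
      rw [hterm_norm]
      exact (hwctrl k m).1
    · apply IsUltrametricDist.norm_tsum_le_of_forall_le_of_nonneg (by positivity)
      intro k
      rw [hterm_norm]
      calc ‖w k m‖ ≤ q ^ k * r ^ (-m) := (hwctrl k m).2
        _ ≤ 1 * r ^ (-m) :=
            mul_le_mul_of_nonneg_right (pow_le_one₀ hq0 hq1.le) (zpow_pos hr0 _).le
  -- partial sums
  set B : ℕ → ℤ → K := fun n l => ∑ k ∈ Finset.range n, (-1:K) ^ k * w k l with hBdef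
  have hBctrl : ∀ n l, ‖B n l‖ ≤ 1 ∧ ‖B n l‖ ≤ 1 * r ^ (-l) := by
    intro n l
    constructor
    · apply IsUltrametricDist.norm_sum_le_of_forall_le_of_nonneg zero_le_one
      intro k _
      rw [hterm_norm]
      exact (hwctrl k l).1
    · apply IsUltrametricDist.norm_sum_le_of_forall_le_of_nonneg (by positivity)
      intro k _
      rw [hterm_norm]
      calc ‖w k l‖ ≤ q ^ k * r ^ (-l) := (hwctrl k l).2
        _ ≤ 1 * r ^ (-l) :=
            mul_le_mul_of_nonneg_right (pow_le_one₀ hq0 hq1.le) (zpow_pos hr0 _).le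
  have htail : ∀ n l, ‖b' l - B n l‖ ≤ 1 ∧ ‖b' l - B n l‖ ≤ q ^ n * r ^ (-l) := by
    intro n l
    have he : b' l - B n l = ∑' k : ℕ, (-1:K) ^ (k + n) * w (k + n) l := by
      have h := Summable.sum_add_tsum_nat_add (f := fun k : ℕ => (-1:K) ^ k * w k l) n (hsumk l)
      show (∑' k : ℕ, (-1:K) ^ k * w k l) - (∑ k ∈ Finset.range n, (-1:K) ^ k * w k l) =
        ∑' k : ℕ, (-1:K) ^ (k + n) * w (k + n) l
      rw [← h]
      ring
    rw [he]
    constructor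
    · apply IsUltrametricDist.norm_tsum_le_of_forall_le_of_nonneg zero_le_one
      intro k
      rw [hterm_norm]
      exact (hwctrl _ l).1
    · apply IsUltrametricDist.norm_tsum_le_of_forall_le_of_nonneg (by positivity)
      intro k
      rw [hterm_norm]
      calc ‖w (k + n) l‖ ≤ q ^ (k + n) * r ^ (-l) := (hwctrl _ l).2
        _ = q ^ k * (q ^ n * r ^ (-l)) := by rw [pow_add]; ring
        _ ≤ 1 * (q ^ n * r ^ (-l)) := by
            apply mul_le_mul_of_nonneg_right (pow_le_one₀ hq0 hq1.le)
            positivity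
        _ = q ^ n * r ^ (-l) := one_mul _
  -- the key telescoping identity
  have hwnctrl : ∀ n : ℕ, ∀ l, ‖(-1:K) ^ n * w n l‖ ≤ 1 ∧
      ‖(-1:K) ^ n * w n l‖ ≤ q ^ n * r ^ (-l) := by
    intro n l
    rw [hterm_norm]
    exact hwctrl n l
  have hE : ∀ n, ∀ j, seriesMul a' (B n) j = seriesOne j - (-1:K) ^ n * w n j := by
    intro n
    induction n with
    | zero =>
      intro j
      have hB0 : seriesMul a' (B 0) j = 0 := by
        rw [seriesMul]
        have : ∀ i : ℤ, a' i * B 0 (j - i) = 0 := by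
          intro i
          rw [hBdef]
          simp
        simp only [this]
        exact tsum_zero
      rw [hB0, hw0]
      simp
    | succ n ih =>
      intro j
      have hsplit : ∀ l, B (n + 1) l = B n l + (-1:K) ^ n * w n l := by
        intro l
        rw [hBdef]
        exact Finset.sum_range_succ _ n
      have hS1 : Summable fun i : ℤ => a' i * B n (j - i) :=
        robba_aux_conv_summable hr0 hr1 hactrl (hBctrl n) j
      have hS2 : Summable fun i : ℤ => a' i * ((-1:K) ^ n * w n (j - i)) :=
        robba_aux_conv_summable hr0 hr1 hactrl (hwnctrl n) j
      have step1 : seriesMul a' (B (n + 1)) j =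
          seriesMul a' (B n) j + ∑' i : ℤ, a' i * ((-1:K) ^ n * w n (j - i)) := by
        rw [seriesMul, seriesMul]
        have : ∀ i : ℤ, a' i * B (n + 1) (j - i) =
            a' i * B n (j - i) + a' i * ((-1:K) ^ n * w n (j - i)) := by
          intro i
          rw [hsplit]
          ring
        simp only [this]
        exact Summable.tsum_add hS1 hS2
      have step2 : ∑' i : ℤ, a' i * ((-1:K) ^ n * w n (j - i)) =
          (-1:K) ^ n * seriesMul a' (w n) j := by
        rw [seriesMul]
        rw [← tsum_mul_left]
        congr 1
        funext i
        ring
      have step3 : seriesMul a' (w n) j = w n j + w (n + 1) j := by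
        rw [seriesMul]
        have hS3 : Summable fun i : ℤ => seriesOne i * w n (j - i) :=
          robba_aux_conv_summable hr0 hr1 hone (hwctrl n) j
        have hS4 : Summable fun i : ℤ => z i * w n (j - i) :=
          robba_aux_conv_summable hr0 hr1 hzctrl (hwctrl n) j
        have : ∀ i : ℤ, a' i * w n (j - i) =
            seriesOne i * w n (j - i) + z i * w n (j - i) := by
          intro i
          rw [haz i]
          ring
        simp only [this]
        rw [Summable.tsum_add hS3 hS4]
        congr 1
        · rw [tsum_eq_single 0]
          · simp [seriesOne]
          · intro i hi
            simp [seriesOne, hi]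
        · rw [hwsucc]
          rfl
      rw [step1, step2, step3, ih j, pow_succ]
      ring
  -- taking limits
  have hfinal : ∀ j, seriesMul a' b' j = seriesOne j := by
    intro j
    have hSb' : Summable fun i : ℤ => a' i * b' (j - i) :=
      robba_aux_conv_summable hr0 hr1 hactrl hb'ctrl j
    have h1 : Tendsto (fun n => seriesMul a' (B n) j) atTop (𝓝 (seriesMul a' b' j)) := by
      rw [tendsto_iff_norm_sub_tendsto_zero]
      refine squeeze_zero (fun n => norm_nonneg _)
        (g := fun n : ℕ => r ^ (-j) * q ^ n) (fun n => ?_) ?_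
      · have hSB : Summable fun i : ℤ => a' i * B n (j - i) :=
          robba_aux_conv_summable hr0 hr1 hactrl (hBctrl n) j
        have hdiff : seriesMul a' b' j - seriesMul a' (B n) j =
            seriesMul a' (fun l => b' l - B n l) j := by
          rw [seriesMul, seriesMul, seriesMul, ← Summable.tsum_sub hSb' hSB]
          congr 1
          funext i
          ring
        rw [norm_sub_rev, hdiff]
        have h := robba_aux_conv_bound hr0 hactrl (fun l => htail n l) j
        calc ‖seriesMul a' (fun l => b' l - B n l) j‖ ≤ 1 * q ^ n * r ^ (-j) := h.2
          _ = r ^ (-j) * q ^ n := by ring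
      · simpa using (tendsto_pow_atTop_nhds_zero_of_lt_one hq0 hq1).const_mul (r ^ (-j))
    have h2 : Tendsto (fun n => seriesMul a' (B n) j) atTop (𝓝 (seriesOne j)) := by
      have h3 : Tendsto (fun n : ℕ => (-1:K) ^ n * w n j) atTop (𝓝 0) := by
        refine squeeze_zero_norm (a := fun n : ℕ => r ^ (-j) * q ^ n) (fun n => ?_) ?_
        · rw [hterm_norm]
          calc ‖w n j‖ ≤ q ^ n * r ^ (-j) := (hwctrl n j).2
            _ = r ^ (-j) * q ^ n := by ring
        · simpa using (tendsto_pow_atTop_nhds_zero_of_lt_one hq0 hq1).const_mul (r ^ (-j))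
      have h4 := (tendsto_const_nhds (x := seriesOne j) (f := atTop (α := ℕ))).sub h3
      rw [sub_zero] at h4
      exact h4.congr fun n => (hE n j).symm
    exact tendsto_nhds_unique h1 h2
  -- final inverse
  refine ⟨fun l => (a i₀)⁻¹ * b' (l + i₀), ⟨?_, ?_⟩, ?_⟩
  · -- bounded
    refine ⟨M⁻¹, ?_⟩
    rintro x ⟨l, rfl⟩
    simp only [norm_mul, norm_inv, ← hMdef]
    calc M⁻¹ * ‖b' (l + i₀)‖ ≤ M⁻¹ * 1 :=
          mul_le_mul_of_nonneg_left (hb'ctrl _).1 (by positivity)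
      _ = M⁻¹ := mul_one _
  · -- decay at -∞
    refine ⟨(1 + r) / 2, by linarith, by linarith, ?_⟩
    set η' : ℝ := (1 + r) / 2 with hη'def
    have hη'0 : (0:ℝ) < η' := by rw [hη'def]; linarith
    have hrη' : r < η' := by rw [hη'def]; linarith
    have hη'1 : η' < 1 := by rw [hη'def]; linarith
    have hρ1 : r / η' < 1 := (div_lt_one hη'0).mpr hrη'
    have hρ0 : (0:ℝ) ≤ r / η' := by positivity
    refine squeeze_zero (fun l => by positivity)
      (g := fun l : ℤ => (M⁻¹ * r ^ (-i₀)) * (r / η') ^ (-l)) (fun l => ?_) ?_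
    · have hb1 : ‖(a i₀)⁻¹ * b' (l + i₀)‖ ≤ M⁻¹ * (1 * r ^ (-(l + i₀))) := by
        simp only [norm_mul, norm_inv, ← hMdef]
        exact mul_le_mul_of_nonneg_left (hb'ctrl _).2 (by positivity)
      have he1 : (r / η') ^ (-l) = r ^ (-l) * η' ^ l := by
        rw [div_zpow, div_eq_mul_inv, ← zpow_neg, neg_neg]
      have he2 : M⁻¹ * (1 * r ^ (-(l + i₀))) * η' ^ l =
          (M⁻¹ * r ^ (-i₀)) * (r / η') ^ (-l) := by
        rw [he1, one_mul, show -(l + i₀) = -i₀ + -l by ring, zpow_add₀ hr0.ne']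
        ring
      calc ‖(a i₀)⁻¹ * b' (l + i₀)‖ * η' ^ l ≤
            M⁻¹ * (1 * r ^ (-(l + i₀))) * η' ^ l :=
            mul_le_mul_of_nonneg_right hb1 (zpow_pos hη'0 _).le
        _ = (M⁻¹ * r ^ (-i₀)) * (r / η') ^ (-l) := he2
    · simpa using (robba_aux_zpow_tendsto_atBot hρ0 hρ1).const_mul (M⁻¹ * r ^ (-i₀))
  · -- the product is one
    funext j
    have hcongr : ∀ i : ℤ, a i * ((a i₀)⁻¹ * b' (j - i + i₀)) =
        a' (i - i₀) * b' (j - (i - i₀)) := by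
      intro i
      have e1 : a' (i - i₀) = (a i₀)⁻¹ * a i := by
        rw [ha'def]
        simp [sub_add_cancel]
      rw [e1, show j - (i - i₀) = j - i + i₀ by ring]
      ring
    calc seriesMul a (fun l => (a i₀)⁻¹ * b' (l + i₀)) j
        = ∑' i : ℤ, a' (i - i₀) * b' (j - (i - i₀)) := by
          rw [seriesMul]
          exact tsum_congr hcongr
      _ = ∑' i : ℤ, a' i * b' (j - i) :=
          (Equiv.subRight i₀).tsum_eq (fun i => a' i * b' (j - i))
      _ = seriesOne j := hfinal j
end

section
/- The Gauss norm on the Amice ring is multiplicative: for f = ∑ a_i t^i and g = ∑ b_i t^i in E_K, defining ‖f‖ = sup_i ‖a_i‖, one has ‖fg‖ = ‖f‖·‖g‖. Consequently E_K, equipped with ‖·‖, is a normed integral domain (and in fact a nonarchimedean valued field). -/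
/-!
STATEMENT 14: The Gauss norm on the Amice ring is multiplicative: for
`f, g ∈ E_K`, `‖fg‖ = ‖f‖·‖g‖` where `‖∑ aᵢ tⁱ‖ = sup ‖aᵢ‖`.  Consequently `E_K`
is a normed integral domain (in particular products of nonzero elements are
nonzero).  Here `K` is a complete discretely valued nonarchimedean field.
-/

open Filter Topology

variable {K : Type*} [NontriviallyNormedField K] [CompleteSpace K] [IsUltrametricDist K]

/-- Membership in the Amice ring. -/
def AmiceMem (a : ℤ → K) : Prop :=
  BddAbove (Set.range fun i : ℤ => ‖a i‖) ∧
    Tendsto (fun i : ℤ => ‖a i‖) atBot (𝓝 0)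

/-- The Gauss norm `‖∑ aᵢ tⁱ‖ = sup ‖aᵢ‖`. -/
noncomputable def gaussNorm (a : ℤ → K) : ℝ :=
  sSup (Set.range fun i : ℤ => ‖a i‖)

lemma gaussNorm_nonneg {a : ℤ → K} (ha : AmiceMem a) : 0 ≤ gaussNorm a :=
  le_csSup_of_le ha.1 ⟨0, rfl⟩ (norm_nonneg _)

lemma le_gaussNorm {a : ℤ → K} (ha : AmiceMem a) (i : ℤ) : ‖a i‖ ≤ gaussNorm a :=
  le_csSup ha.1 ⟨i, rfl⟩

lemma gaussNorm_pos {a : ℤ → K} (ha : AmiceMem a) (h : a ≠ 0) : 0 < gaussNorm a := by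
  obtain ⟨i, hi⟩ : ∃ i, a i ≠ 0 := by
    by_contra hcon
    push_neg at hcon
    exact h (funext hcon)
  exact lt_of_lt_of_le (norm_pos_iff.mpr hi) (le_gaussNorm ha i)

/-- Summability of the convolution terms. -/
lemma amice_summable {f g : ℤ → K} (hf : AmiceMem f) (hg : AmiceMem g) (n : ℤ) :
    Summable fun i : ℤ => f i * g (n - i) := by
  obtain ⟨Cf, hCf⟩ := hf.1
  obtain ⟨Cg, hCg⟩ := hg.1
  have hCf' : ∀ i, ‖f i‖ ≤ Cf := fun i => hCf ⟨i, rfl⟩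
  have hCg' : ∀ i, ‖g i‖ ≤ Cg := fun i => hCg ⟨i, rfl⟩
  apply NonarchimedeanAddGroup.summable_of_tendsto_cofinite_zero
  rw [tendsto_zero_iff_norm_tendsto_zero]
  rw [show (cofinite : Filter ℤ) = atBot ⊔ atTop from Int.cofinite_eq, tendsto_sup]
  constructor
  · have hb : Tendsto (fun i : ℤ => ‖f i‖ * Cg) atBot (𝓝 0) := by
      simpa using hf.2.mul_const Cg
    refine squeeze_zero (fun i => norm_nonneg _) (fun i => ?_) hb
    rw [norm_mul]
    exact mul_le_mul_of_nonneg_left (hCg' _) (norm_nonneg _)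
  · have hcomp : Tendsto (fun i : ℤ => n - i) atTop atBot := by
      exact (tendsto_atBot_add_const_left atTop n tendsto_neg_atTop_atBot).congr (fun i => (sub_eq_add_neg n i).symm)
    have hb : Tendsto (fun i : ℤ => Cf * ‖g (n - i)‖) atTop (𝓝 0) := by
      simpa using (hg.2.comp hcomp).const_mul Cf
    refine squeeze_zero (fun i => norm_nonneg _) (fun i => ?_) hb
    rw [norm_mul]
    exact mul_le_mul_of_nonneg_right (hCf' _) (norm_nonneg _)

/-- In the discretely valued case, the Gauss norm is attained, at a least index, and
coefficients below that index have norm at most `c * gaussNorm`. -/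
lemma amice_exists_least {c : ℝ} (hc0 : 0 < c) (hc1 : c < 1)
    (hc : ∀ x : K, x ≠ 0 → ∃ n : ℤ, ‖x‖ = c ^ n)
    {f : ℤ → K} (hf : AmiceMem f) (hf0 : f ≠ 0) :
    ∃ i0 : ℤ, ‖f i0‖ = gaussNorm f ∧ ∀ i < i0, ‖f i‖ ≤ c * gaussNorm f := by
  set A := gaussNorm f with hA
  have hA0 : 0 < A := gaussNorm_pos hf hf0
  have hcA : c * A < A := by
    have := mul_lt_mul_of_pos_right hc1 hA0
    simpa using this
  obtain ⟨x, ⟨i1, rfl⟩, hx⟩ := exists_lt_of_lt_csSup (Set.range_nonempty _) hcA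
  dsimp only at hx
  have hfi1 : f i1 ≠ 0 := by
    intro h0
    rw [h0, norm_zero] at hx
    exact absurd hx (not_lt.mpr (by positivity))
  obtain ⟨p, hp⟩ := hc (f i1) hfi1
  -- every coefficient has norm at most `c ^ p`
  have hub : ∀ i, ‖f i‖ ≤ c ^ p := by
    intro i
    by_contra hlt
    push_neg at hlt
    have hfi : f i ≠ 0 := by
      intro h0
      rw [h0, norm_zero] at hlt
      exact absurd hlt (not_lt.mpr (by positivity))
    obtain ⟨m, hm⟩ := hc (f i) hfi
    rw [hm] at hlt
    have hmp : m < p := by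
      by_contra hge
      push_neg at hge
      exact absurd (zpow_le_zpow_right_of_le_one₀ hc0 hc1.le hge) (not_le.mpr hlt)
    have : c ^ (p - 1) ≤ c ^ m := zpow_le_zpow_right_of_le_one₀ hc0 hc1.le (by omega)
    have hpA : A < c ^ (p - 1) := by
      have h1 : c * A < c ^ p := hp ▸ hx
      have : c ^ (p - 1) = c ^ p / c := by
        rw [zpow_sub₀ (ne_of_gt hc0), zpow_one]
      rw [this]
      exact (lt_div_iff₀ hc0).mpr (by linarith [mul_comm c A])
    have : A < ‖f i‖ := by rw [hm]; exact lt_of_lt_of_le hpA this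
    exact absurd (le_gaussNorm hf i) (not_le.mpr this)
  have hAcp : A = c ^ p := by
    apply le_antisymm
    · exact csSup_le (Set.range_nonempty _) (by rintro x ⟨i, rfl⟩; exact hub i)
    · rw [← hp]; exact le_gaussNorm hf i1
  -- the set of indices attaining the sup is bounded below
  have hbdd : ∃ b : ℤ, ∀ z : ℤ, ‖f z‖ = A → b ≤ z := by
    have hev : ∀ᶠ i in (atBot : Filter ℤ), ‖f i‖ < A := by
      have : Set.Iio A ∈ 𝓝 (0 : ℝ) := Iio_mem_nhds hA0
      exact hf.2.eventually (eventually_of_mem this fun x hx => hx)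
    obtain ⟨N, hN⟩ := eventually_atBot.mp hev
    exact ⟨N + 1, fun z hz => by
      by_contra hlt
      push_neg at hlt
      exact absurd hz (ne_of_lt (hN z (by omega)))⟩
  obtain ⟨i0, hi0, hleast⟩ := Int.exists_least_of_bdd
    (P := fun z => ‖f z‖ = A) hbdd ⟨i1, show ‖f i1‖ = A by rw [hp, ← hAcp]⟩
  refine ⟨i0, hi0, fun i hi => ?_⟩
  rcases eq_or_ne (f i) 0 with h0 | h0
  · rw [h0, norm_zero]; positivity
  · obtain ⟨m, hm⟩ := hc (f i) h0
    have hne : ‖f i‖ ≠ A := fun heq => absurd (hleast i heq) (not_le.mpr hi)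
    have hlt : ‖f i‖ < A := lt_of_le_of_ne (le_gaussNorm hf i) hne
    rw [hm, hAcp] at hlt ⊢
    have hmp : p < m := by
      by_contra hge
      push_neg at hge
      exact absurd (zpow_le_zpow_right_of_le_one₀ hc0 hc1.le hge) (not_le.mpr hlt)
    calc c ^ m ≤ c ^ (p + 1) := zpow_le_zpow_right_of_le_one₀ hc0 hc1.le (by omega)
    _ = c * c ^ p := by rw [zpow_add₀ (ne_of_gt hc0), zpow_one]; ring

/-- The Gauss norm on the Amice ring is multiplicative, and consequently `E_K` is an
integral domain.  The hypothesis `hdisc` says that `K` is discretely valued. -/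
theorem gaussNorm_mul
    (hdisc : ∃ c : ℝ, 0 < c ∧ c < 1 ∧ ∀ x : K, x ≠ 0 → ∃ n : ℤ, ‖x‖ = c ^ n)
    (f g : ℤ → K) (hf : AmiceMem f) (hg : AmiceMem g) :
    gaussNorm (seriesMul f g) = gaussNorm f * gaussNorm g ∧
      (f ≠ 0 → g ≠ 0 → seriesMul f g ≠ 0) := by
  obtain ⟨c, hc0, hc1, hc⟩ := hdisc
  by_cases hf0 : f = 0
  · subst hf0
    have h0 : seriesMul (0 : ℤ → K) g = 0 := by
      funext n; simp [seriesMul]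
    rw [h0]
    constructor
    · have : gaussNorm (0 : ℤ → K) = 0 := by
        simp [gaussNorm, Set.range_const]
      rw [this, zero_mul]
    · intro h; exact absurd rfl h
  by_cases hg0 : g = 0
  · subst hg0
    have h0 : seriesMul f (0 : ℤ → K) = 0 := by
      funext n; simp [seriesMul]
    rw [h0]
    constructor
    · have : gaussNorm (0 : ℤ → K) = 0 := by
        simp [gaussNorm, Set.range_const]
      rw [this, mul_zero]
    · intro _ h; exact absurd rfl h
  -- main case
  set A := gaussNorm f with hA
  set B := gaussNorm g with hB
  have hA0 : 0 < A := gaussNorm_pos hf hf0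
  have hB0 : 0 < B := gaussNorm_pos hg hg0
  obtain ⟨i0, hi0, hfsmall⟩ := amice_exists_least hc0 hc1 hc hf hf0
  obtain ⟨j0, hj0, hgsmall⟩ := amice_exists_least hc0 hc1 hc hg hg0
  set n0 := i0 + j0 with hn0
  -- upper bound on all coefficients of the product
  have hub : ∀ n : ℤ, ‖seriesMul f g n‖ ≤ A * B := by
    intro n
    apply IsUltrametricDist.norm_tsum_le_of_forall_le_of_nonneg (by positivity)
    intro i
    rw [norm_mul]
    exact mul_le_mul (le_gaussNorm hf i) (le_gaussNorm hg _) (norm_nonneg _) hA0.le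
  -- the coefficient at `n0` has norm exactly `A * B`
  have hkey : ‖seriesMul f g n0‖ = A * B := by
    have hsum := amice_summable hf hg n0
    have hsplit := Summable.tsum_eq_add_tsum_ite hsum i0
    have hrest : ‖∑' i : ℤ, (if i = i0 then 0 else f i * g (n0 - i))‖ ≤ c * (A * B) := by
      apply IsUltrametricDist.norm_tsum_le_of_forall_le_of_nonneg (by positivity)
      intro i
      by_cases hi : i = i0
      · simp [hi]; positivity
      · simp only [hi, if_false, norm_mul]
        rcases lt_or_gt_of_ne hi with hlt | hgt
        · calc ‖f i‖ * ‖g (n0 - i)‖ ≤ (c * A) * B :=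
              mul_le_mul (hfsmall i hlt) (le_gaussNorm hg _) (norm_nonneg _) (by positivity)
          _ = c * (A * B) := by ring
        · have : n0 - i < j0 := by omega
          calc ‖f i‖ * ‖g (n0 - i)‖ ≤ A * (c * B) :=
              mul_le_mul (le_gaussNorm hf i) (hgsmall _ this) (norm_nonneg _) hA0.le
          _ = c * (A * B) := by ring
    have hmain : ‖f i0 * g (n0 - i0)‖ = A * B := by
      rw [norm_mul, show n0 - i0 = j0 by omega, hi0, hj0]
    have hlt : ‖∑' i : ℤ, (if i = i0 then 0 else f i * g (n0 - i))‖ < ‖f i0 * g (n0 - i0)‖ := by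
      rw [hmain]
      calc _ ≤ c * (A * B) := hrest
      _ < 1 * (A * B) := by
        apply mul_lt_mul_of_pos_right hc1 (by positivity)
      _ = A * B := one_mul _
    have hne : ‖f i0 * g (n0 - i0)‖ ≠ ‖∑' i : ℤ, (if i = i0 then 0 else f i * g (n0 - i))‖ :=
      (ne_of_lt hlt).symm
    have := IsUltrametricDist.norm_add_eq_max_of_norm_ne_norm hne
    show ‖∑' i : ℤ, f i * g (n0 - i)‖ = A * B
    rw [hsplit, this, max_eq_left hlt.le, hmain]
  constructor
  · apply le_antisymm
    · exact csSup_le (Set.range_nonempty _) (by rintro x ⟨n, rfl⟩; exact hub n)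
    · rw [← hkey]
      exact le_csSup ⟨A * B, by rintro x ⟨n, rfl⟩; exact hub n⟩ ⟨n0, rfl⟩
  · intro _ _ hcon
    have : ‖seriesMul f g n0‖ = 0 := by rw [hcon]; simp
    rw [hkey] at this
    nlinarith
end
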